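/- Let Λ be a countable finitely aligned category of paths, v a vertex, and C ∈ vΛ*. Then: (a) 𝒰_{C,0} is an ultrafilter in 𝒜_v if and only if C ∈ vΛ**; (b) 𝒰_C is an ultrafilter in 𝒜_v, and 𝒰_C is fixed (i.e. equal to {E ∈ 𝒜_v : γ ∈ E} for some γ ∈ vΛ) if and only if C contains a maximal element with respect to the extension order; (c) every ultrafilter in 𝒜_v equals 𝒰_C for a unique C ∈ vΛ*. -/

import Mathlib

universe u v

/-- A category of paths: a small category (objects identified with identity
morphisms) with left and right cancellation and no inverses. -/
structure CategoryOfPaths (Λ : Type u) where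
  s : Λ → Λ
  r : Λ → Λ
  comp : Λ → Λ → Λ
  s_comp : ∀ {α β : Λ}, s α = r β → s (comp α β) = s β
  r_comp : ∀ {α β : Λ}, s α = r β → r (comp α β) = r α
  comp_assoc : ∀ {α β γ : Λ}, s α = r β → s β = r γ →
    comp (comp α β) γ = comp α (comp β γ)
  id_comp : ∀ α : Λ, comp (r α) α = α
  comp_id : ∀ α : Λ, comp α (s α) = α
  s_r : ∀ α : Λ, s (r α) = r α
  r_r : ∀ α : Λ, r (r α) = r α
  r_s : ∀ α : Λ, r (s α) = s α
  s_s : ∀ α : Λ, s (s α) = s α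
  left_cancel : ∀ {α β γ : Λ}, s α = r β → s α = r γ → comp α β = comp α γ → β = γ
  right_cancel : ∀ {β γ α : Λ}, s β = r α → s γ = r α → comp β α = comp γ α → β = γ
  no_inverses : ∀ {α β : Λ}, s α = r β → comp α β = s β → α = s β ∧ β = s β

variable {Λ : Type u}

/-- The tail set `αΛ`. -/
def pTail (C : CategoryOfPaths Λ) (α : Λ) : Set Λ :=
  {x | ∃ β, C.s α = C.r β ∧ x = C.comp α β}

/-- `vΛ`, the paths with range `v`. -/
def pRng (C : CategoryOfPaths Λ) (w : Λ) : Set Λ := {α | C.r α = w}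

/-- `Λv`, the paths with source `v`. -/
def pSrc (C : CategoryOfPaths Λ) (w : Λ) : Set Λ := {α | C.s α = w}

/-- `[β]`, the initial segments of `β`. -/
def pSeg (C : CategoryOfPaths Λ) (β : Λ) : Set Λ := {α | β ∈ pTail C α}

/-- `α ⋔ β`. -/
def pMeets (C : CategoryOfPaths Λ) (α β : Λ) : Prop :=
  (pTail C α ∩ pTail C β).Nonempty

/-- `αE`. -/
def pMulSet (C : CategoryOfPaths Λ) (α : Λ) (E : Set Λ) : Set Λ :=
  {x | ∃ β ∈ E, C.s α = C.r β ∧ x = C.comp α β}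

/-- `σ^α(E ∩ αΛ)`, computed inside an ambient subcategory `S`. -/
def pShiftIn (C : CategoryOfPaths Λ) (S : Set Λ) (α : Λ) (E : Set Λ) : Set Λ :=
  {β | β ∈ S ∧ C.s α = C.r β ∧ C.comp α β ∈ E}

/-- `σ^α(E ∩ αΛ)`. -/
def pShift (C : CategoryOfPaths Λ) (α : Λ) (E : Set Λ) : Set Λ :=
  {β | C.s α = C.r β ∧ C.comp α β ∈ E}

/-- `⋁F`: the minimal common extensions of `F`. -/
def pMinExt (C : CategoryOfPaths Λ) (F : Set Λ) : Set Λ :=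
  {ε | (∀ α ∈ F, ε ∈ pTail C α) ∧
    ∀ γ, (∀ α ∈ F, γ ∈ pTail C α) → ε ∈ pTail C γ → γ = ε}

/-- `α ∨ β`: the minimal common extensions of `α` and `β`. -/
def pMinCE (C : CategoryOfPaths Λ) (α β : Λ) : Set Λ := pMinExt C {α, β}

/-- A subcategory of a category of paths, as a set of morphisms. -/
structure IsSubcategory (C : CategoryOfPaths Λ) (Λ₀ : Set Λ) : Prop where
  comp_mem : ∀ {α β : Λ}, α ∈ Λ₀ → β ∈ Λ₀ → C.s α = C.r β → C.comp α β ∈ Λ₀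
  s_mem : ∀ {α : Λ}, α ∈ Λ₀ → C.s α ∈ Λ₀
  r_mem : ∀ {α : Λ}, α ∈ Λ₀ → C.r α ∈ Λ₀

/-- A finitely aligned category of paths. -/
def FinitelyAligned (C : CategoryOfPaths Λ) : Prop :=
  ∀ α β : Λ, ∃ G : Set Λ, G.Finite ∧
    pTail C α ∩ pTail C β = ⋃ ε ∈ G, pTail C ε

/-- A finitely aligned relative category of paths `(Λ₀, Λ)`. -/
def RelFinitelyAligned (C : CategoryOfPaths Λ) (Λ₀ : Set Λ) : Prop :=
  (∀ α ∈ Λ₀, ∀ β ∈ Λ₀, ∃ G : Set Λ, G.Finite ∧ G ⊆ Λ₀ ∧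
      pTail C α ∩ pTail C β = ⋃ ε ∈ G, pTail C ε) ∧
  (∀ α ∈ Λ₀, pTail C α ∩ Λ₀ = pMulSet C α Λ₀)

/-- A ring of sets: contains `∅` and is closed under `∪`, `∩`, and `\`. -/
def IsSetRing {γ : Type v} (R : Set (Set γ)) : Prop :=
  ∅ ∈ R ∧ (∀ E ∈ R, ∀ F ∈ R, E ∪ F ∈ R) ∧ (∀ E ∈ R, ∀ F ∈ R, E ∩ F ∈ R) ∧
    (∀ E ∈ R, ∀ F ∈ R, E \ F ∈ R)

/-- A ring of sets on `S`: a ring of sets all of whose members are subsets of `S`. -/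
def IsSetRingOn {γ : Type v} (S : Set γ) (R : Set (Set γ)) : Prop :=
  IsSetRing R ∧ ∀ E ∈ R, E ⊆ S

/-- The ring of sets generated by a collection. -/
def setRingGen {γ : Type v} (G : Set (Set γ)) : Set (Set γ) :=
  ⋂₀ {R | IsSetRing R ∧ G ⊆ R}

/-- The ring of sets on `S` generated by a collection. -/
def setRingGenOn {γ : Type v} (S : Set γ) (G : Set (Set γ)) : Set (Set γ) :=
  ⋂₀ {R | IsSetRingOn S R ∧ G ⊆ R}

/-- A zigzag: a list of pairs `(αᵢ, βᵢ)` with `r αᵢ = r βᵢ` and `s αᵢ₊₁ = s βᵢ`. -/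
def IsZigzag (C : CategoryOfPaths Λ) (l : List (Λ × Λ)) : Prop :=
  (∀ p ∈ l, C.r p.1 = C.r p.2) ∧ l.Chain' (fun p q => C.s q.1 = C.s p.2)

/-- The (graph of the) zigzag map `φ_ζ = σ^{α₁} β₁ ⋯ σ^{αₙ} βₙ`, computed
inside an ambient subcategory `S`. -/
def zigzagRelIn (C : CategoryOfPaths Λ) (S : Set Λ) : List (Λ × Λ) → Λ → Λ → Prop
  | [], x, y => x = y ∧ x ∈ S
  | p :: rest, x, y => ∃ z, zigzagRelIn C S rest x z ∧ C.s p.2 = C.r z ∧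
      C.s p.1 = C.r y ∧ y ∈ S ∧ C.comp p.2 z = C.comp p.1 y

/-- `A(ζ)`: the domain of the zigzag map. -/
def zigzagDomIn (C : CategoryOfPaths Λ) (S : Set Λ) (l : List (Λ × Λ)) : Set Λ :=
  {x | ∃ y, zigzagRelIn C S l x y}

/-- `𝒟(Λ₀,Λ)⁰_v`: nonempty zigzag sets with entries in `Λ₀` and source `v`,
computed inside the ambient subcategory `S`. -/
def relD0 (C : CategoryOfPaths Λ) (Λ₀ S : Set Λ) (w : Λ) : Set (Set Λ) :=
  {E | E.Nonempty ∧ ∃ (l : List (Λ × Λ)) (h : l ≠ []),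
    IsZigzag C l ∧ (∀ p ∈ l, p.1 ∈ Λ₀ ∧ p.2 ∈ Λ₀) ∧
    C.s (l.getLast h).2 = w ∧ E = zigzagDomIn C S l}

/-- `𝒜(Λ₀,Λ)_v`: the ring of sets generated by the zigzag sets. -/
def relAring (C : CategoryOfPaths Λ) (Λ₀ S : Set Λ) (w : Λ) : Set (Set Λ) :=
  setRingGenOn {α | α ∈ S ∧ C.r α = w} (relD0 C Λ₀ S w)

/-- A filter in a ring of sets. -/
def IsFilterIn {γ : Type v} (R U : Set (Set γ)) : Prop :=
  U.Nonempty ∧ U ⊆ R ∧ (∀ E ∈ U, E.Nonempty) ∧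
    (∀ E ∈ U, ∀ F ∈ U, E ∩ F ∈ U) ∧ (∀ E ∈ U, ∀ F ∈ R, E ⊆ F → F ∈ U)

/-- An ultrafilter in a ring of sets: a maximal filter. -/
def IsUltrafilterIn {γ : Type v} (R U : Set (Set γ)) : Prop :=
  IsFilterIn R U ∧ ∀ V, IsFilterIn R V → U ⊆ V → V = U

/-- A filter base in a ring of sets. -/
def IsFilterBaseIn {γ : Type v} (R B : Set (Set γ)) : Prop :=
  B.Nonempty ∧ B ⊆ R ∧ (∀ E ∈ B, E.Nonempty) ∧
    ∀ E ∈ B, ∀ F ∈ B, ∃ G ∈ B, G ⊆ E ∩ F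

/-- The filter generated by a filter base. -/
def filterGenBy {γ : Type v} (R B : Set (Set γ)) : Set (Set γ) :=
  {E | E ∈ R ∧ ∃ F ∈ B, F ⊆ E}

/-- An ultrafilter base in a ring of sets. -/
def IsUltrafilterBaseIn {γ : Type v} (R B : Set (Set γ)) : Prop :=
  IsFilterBaseIn R B ∧ IsUltrafilterIn R (filterGenBy R B)

/-- A Boolean ring homomorphism defined on a ring of sets `A` with values in a
generalized Boolean algebra. -/
def IsBRHomOn {γ : Type v} {R : Type*} [GeneralizedBooleanAlgebra R]
    (A : Set (Set γ)) (ν : Set γ → R) : Prop :=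
  ν ∅ = ⊥ ∧ (∀ E ∈ A, ∀ F ∈ A, ν (E ∪ F) = ν E ⊔ ν F) ∧
    (∀ E ∈ A, ∀ F ∈ A, ν (E ∩ F) = ν E ⊓ ν F) ∧
    (∀ E ∈ A, ∀ F ∈ A, ν (E \ F) = ν E \ ν F)

/-- `𝒜_v`: the ring of sets on `vΛ` generated by the tail sets. -/
def tailRing (C : CategoryOfPaths Λ) (w : Λ) : Set (Set Λ) :=
  setRingGenOn (pRng C w) {E | ∃ α, C.r α = w ∧ E = pTail C α}

/-- A directed subset. -/
def pDirected (C : CategoryOfPaths Λ) (x : Set Λ) : Prop :=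
  ∀ α ∈ x, ∀ β ∈ x, (pTail C α ∩ pTail C β ∩ x).Nonempty

/-- A hereditary subset. -/
def pHereditary (C : CategoryOfPaths Λ) (x : Set Λ) : Prop :=
  ∀ γ ∈ x, ∀ α : Λ, γ ∈ pTail C α → α ∈ x

/-- `vΛ*`: the nonempty directed hereditary subsets of `vΛ`. -/
def lamStar (C : CategoryOfPaths Λ) (w : Λ) : Set (Set Λ) :=
  {x | x.Nonempty ∧ x ⊆ pRng C w ∧ pDirected C x ∧ pHereditary C x}

/-- `vΛ**`: the maximal directed subsets of `vΛ`. -/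
def lamStarStar (C : CategoryOfPaths Λ) (w : Λ) : Set (Set Λ) :=
  {x | x ⊆ pRng C w ∧ pDirected C x ∧
    ∀ y, y ⊆ pRng C w → pDirected C y → x ⊆ y → y = x}

/-- `αx = ⋃_{γ ∈ x} [αγ]` for `x ∈ s(α)Λ*`. -/
def pMulStar (C : CategoryOfPaths Λ) (α : Λ) (x : Set Λ) : Set Λ :=
  {δ | ∃ γ ∈ x, C.s α = C.r γ ∧ C.comp α γ ∈ pTail C δ}

/-- `𝒰_{C,0}`. -/
def UC0 (C : CategoryOfPaths Λ) (w : Λ) (x : Set Λ) : Set (Set Λ) :=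
  {E | E ∈ tailRing C w ∧ ∃ α ∈ x, pTail C α ⊆ E}

/-- `𝒰_C`. -/
def UC (C : CategoryOfPaths Λ) (w : Λ) (x : Set Λ) : Set (Set Λ) :=
  {E | E ∈ tailRing C w ∧ ∃ α ∈ x, x ∩ pTail C α ⊆ E}

/-- `X_v = vΛ*` as a type. -/
abbrev Xv (C : CategoryOfPaths Λ) (w : Λ) : Type u := {x : Set Λ // x ∈ lamStar C w}

/-- The topology on `X_v` generated by the sets `Ê`, `E ∈ 𝒜_v`. -/
def XvTop (C : CategoryOfPaths Λ) (w : Λ) : TopologicalSpace (Xv C w) :=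
  TopologicalSpace.generateFrom
    {t | ∃ E ∈ tailRing C w, t = {x : Xv C w | E ∈ UC C w x.1}}

/-- The vertices of `Λ`. -/
abbrev Vertex (C : CategoryOfPaths Λ) : Type u := {w : Λ // C.r w = w}

/-- `X`: the disjoint union of the spaces `X_v`. -/
abbrev Xtotal (C : CategoryOfPaths Λ) : Type u := Σ w : Vertex C, Xv C w.1

/-- The disjoint union topology on `X`. -/
def XtotalTop (C : CategoryOfPaths Λ) : TopologicalSpace (Xtotal C) :=
  letI : ∀ w : Vertex C, TopologicalSpace (Xv C w.1) := fun w => XvTop C w.1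
  inferInstance

/-- The boundary `∂Λ`: the closure of `Λ**` in `X`. -/
def boundarySet (C : CategoryOfPaths Λ) : Set (Xtotal C) :=
  @closure _ (XtotalTop C) {p : Xtotal C | p.2.1 ∈ lamStarStar C p.1.1}

/-- An exhaustive subset of `vΛ`. -/
def ExhaustiveAt (C : CategoryOfPaths Λ) (w : Λ) (F : Set Λ) : Prop :=
  ∀ α, C.r α = w → ∃ β ∈ F, pMeets C α β

/-- An aperiodic point of `Λ*`. -/
def pAperiodic (C : CategoryOfPaths Λ) (x : Set Λ) : Prop :=
  ∀ α ∈ x, ∀ β ∈ x, α ≠ β → pShift C α x ≠ pShift C β x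

/-- A right-aperiodic point of `wΛ*`. -/
def pRightAperiodicAt (C : CategoryOfPaths Λ) (w : Λ) (x : Set Λ) : Prop :=
  ∀ α β : Λ, C.s α = w → C.s β = w → α ≠ β → pMulStar C α x ≠ pMulStar C β x

/-- The triples `(α, β, x)` with `s α = s β` and `x ∈ s(α)Λ*`. -/
abbrev pTrip (C : CategoryOfPaths Λ) : Type u :=
  {t : Λ × Λ × Set Λ // C.s t.1 = C.s t.2.1 ∧ t.2.2 ∈ lamStar C (C.s t.1)}

/-- The groupoid equivalence relation on triples. -/
def tripRel (C : CategoryOfPaths Λ) (t t' : pTrip C) : Prop :=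
  ∃ (z : Set Λ) (δ δ' : Λ),
    z ∈ lamStar C (C.s δ) ∧ z ∈ lamStar C (C.s δ') ∧
    C.s t.1.1 = C.r δ ∧ C.s t'.1.1 = C.r δ' ∧
    t.1.2.2 = pMulStar C δ z ∧ t'.1.2.2 = pMulStar C δ' z ∧
    C.comp t.1.1 δ = C.comp t'.1.1 δ' ∧
    C.comp t.1.2.1 δ = C.comp t'.1.2.1 δ'

/-- The ultrafilter space of `𝒜(Λ₀,Λ)_v`. -/
abbrev relXv (C : CategoryOfPaths Λ) (Λ₀ : Set Λ) (w : Λ) : Type u :=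
  {U : Set (Set Λ) // IsUltrafilterIn (relAring C Λ₀ Set.univ w) U}

/-- The topology on the ultrafilter space of `𝒜(Λ₀,Λ)_v` generated by the `Ê`. -/
def relXvTop (C : CategoryOfPaths Λ) (Λ₀ : Set Λ) (w : Λ) :
    TopologicalSpace (relXv C Λ₀ w) :=
  TopologicalSpace.generateFrom
    {t | ∃ E ∈ relAring C Λ₀ Set.univ w, t = {U : relXv C Λ₀ w | E ∈ U.1}}

section Aux

variable {Λ : Type u} (C : CategoryOfPaths Λ) (v : Λ)

lemma mem_pTail_self (α : Λ) : α ∈ pTail C α :=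
  ⟨C.s α, (C.r_s α).symm, (C.comp_id α).symm⟩

lemma rng_eq_of_mem_pTail {a b : Λ} (h : a ∈ pTail C b) : C.r a = C.r b := by
  obtain ⟨β, h1, h2⟩ := h
  rw [h2, C.r_comp h1]

lemma pTail_subset {a b : Λ} (h : a ∈ pTail C b) : pTail C a ⊆ pTail C b := by
  obtain ⟨d, hd, rfl⟩ := h
  rintro x ⟨e, he, rfl⟩
  have hde : C.s d = C.r e := by rw [← C.s_comp hd]; exact he
  exact ⟨C.comp d e, by rw [C.r_comp hde]; exact hd, C.comp_assoc hd hde⟩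

lemma mem_pTail_trans {a b c : Λ} (h1 : a ∈ pTail C b) (h2 : b ∈ pTail C c) :
    a ∈ pTail C c := pTail_subset C h2 h1

lemma pTail_antisymm {a b : Λ} (h1 : a ∈ pTail C b) (h2 : b ∈ pTail C a) : a = b := by
  obtain ⟨d, hd, rfl⟩ := h1
  obtain ⟨e, he, hbe⟩ := h2
  have hde : C.s d = C.r e := by rw [← C.s_comp hd]; exact he
  have hse : C.s b = C.s e := by conv_lhs => rw [hbe, C.s_comp he]
  have h1' : C.comp b (C.comp d e) = C.comp b (C.s b) := by
    rw [C.comp_id, ← C.comp_assoc hd hde, ← hbe]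
  have h2' : C.comp d e = C.s b :=
    C.left_cancel (by rw [C.r_comp hde]; exact hd) (C.r_s b).symm h1'
  have h3 := C.no_inverses hde (h2'.trans hse)
  rw [h3.1, ← hse, C.comp_id]

lemma powerset_isSetRingOn {γ : Type v} (S : Set γ) : IsSetRingOn S {E | E ⊆ S} :=
  ⟨⟨Set.empty_subset S, fun _ hE _ hF => Set.union_subset hE hF,
    fun E hE F _ => Set.inter_subset_left.trans hE,
    fun E hE F _ => Set.diff_subset.trans hE⟩, fun _ hE => hE⟩

lemma subset_setRingGenOn {γ : Type v} (S : Set γ) (G : Set (Set γ)) :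
    G ⊆ setRingGenOn S G :=
  fun _ hE => Set.mem_sInter.2 fun _ hR => hR.2 hE

lemma setRingGenOn_subset {γ : Type v} {S : Set γ} {G R : Set (Set γ)}
    (hR : IsSetRingOn S R) (hGR : G ⊆ R) : setRingGenOn S G ⊆ R :=
  Set.sInter_subset_of_mem ⟨hR, hGR⟩

lemma isSetRingOn_setRingGenOn {γ : Type v} {S : Set γ} {G : Set (Set γ)}
    (hG : ∀ E ∈ G, E ⊆ S) : IsSetRingOn S (setRingGenOn S G) := by
  have hmem : ∀ E : Set γ, E ∈ setRingGenOn S G ↔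
      ∀ R, IsSetRingOn S R → G ⊆ R → E ∈ R := by
    intro E
    simp [setRingGenOn, Set.mem_sInter, and_imp]
  refine ⟨⟨?_, ?_, ?_, ?_⟩, ?_⟩
  · exact (hmem _).2 fun R hR _ => hR.1.1
  · intro E hE F hF
    exact (hmem _).2 fun R hR hGR => hR.1.2.1 E ((hmem _).1 hE R hR hGR) F ((hmem _).1 hF R hR hGR)
  · intro E hE F hF
    exact (hmem _).2 fun R hR hGR => hR.1.2.2.1 E ((hmem _).1 hE R hR hGR) F ((hmem _).1 hF R hR hGR)
  · intro E hE F hF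
    exact (hmem _).2 fun R hR hGR => hR.1.2.2.2 E ((hmem _).1 hE R hR hGR) F ((hmem _).1 hF R hR hGR)
  · intro E hE
    exact (hmem _).1 hE _ (powerset_isSetRingOn S) hG

lemma pTail_subset_pRng {α : Λ} (h : C.r α = v) : pTail C α ⊆ pRng C v :=
  fun _ hx => (rng_eq_of_mem_pTail C hx).trans h

lemma tailRing_isSetRingOn : IsSetRingOn (pRng C v) (tailRing C v) :=
  isSetRingOn_setRingGenOn (by rintro E ⟨α, hα, rfl⟩; exact pTail_subset_pRng C v hα)

lemma pTail_mem_tailRing {α : Λ} (h : C.r α = v) : pTail C α ∈ tailRing C v :=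
  subset_setRingGenOn _ _ ⟨α, h, rfl⟩

end Aux
section Aux2

variable {Λ : Type u} (C : CategoryOfPaths Λ) (v : Λ)

lemma dichotomy_ring (x : Set Λ) (f : Λ → Set Λ) (hne : x.Nonempty)
    (hdir : ∀ α ∈ x, ∀ β ∈ x, ∃ γ ∈ x, f γ ⊆ f α ∧ f γ ⊆ f β) :
    IsSetRing {E : Set Λ | ∃ α ∈ x, f α ⊆ E ∨ ∀ z ∈ f α, z ∉ E} := by
  obtain ⟨a0, ha0⟩ := hne
  refine ⟨⟨a0, ha0, Or.inr fun z _ hz => hz⟩, ?_, ?_, ?_⟩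
  · rintro E ⟨α, hα, hE⟩ F ⟨β, hβ, hF⟩
    obtain ⟨γ, hγ, hγα, hγβ⟩ := hdir α hα β hβ
    refine ⟨γ, hγ, ?_⟩
    rcases hE with hE | hE
    · exact Or.inl fun z hz => Or.inl (hE (hγα hz))
    · rcases hF with hF | hF
      · exact Or.inl fun z hz => Or.inr (hF (hγβ hz))
      · exact Or.inr fun z hz h => h.elim (hE z (hγα hz)) (hF z (hγβ hz))
  · rintro E ⟨α, hα, hE⟩ F ⟨β, hβ, hF⟩
    obtain ⟨γ, hγ, hγα, hγβ⟩ := hdir α hα β hβ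
    refine ⟨γ, hγ, ?_⟩
    rcases hE with hE | hE
    · rcases hF with hF | hF
      · exact Or.inl fun z hz => ⟨hE (hγα hz), hF (hγβ hz)⟩
      · exact Or.inr fun z hz h => hF z (hγβ hz) h.2
    · exact Or.inr fun z hz h => hE z (hγα hz) h.1
  · rintro E ⟨α, hα, hE⟩ F ⟨β, hβ, hF⟩
    obtain ⟨γ, hγ, hγα, hγβ⟩ := hdir α hα β hβ
    refine ⟨γ, hγ, ?_⟩
    rcases hE with hE | hE
    · rcases hF with hF | hF
      · exact Or.inr fun z hz h => h.2 (hF (hγβ hz))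
      · exact Or.inl fun z hz => ⟨hE (hγα hz), hF z (hγβ hz)⟩
    · exact Or.inr fun z hz h => hE z (hγα hz) h.1

lemma isSetRingOn_inter {γ : Type v} {S : Set γ} {R1 R2 : Set (Set γ)}
    (h1 : IsSetRingOn S R1) (h2 : IsSetRing R2) : IsSetRingOn S (R1 ∩ R2) :=
  ⟨⟨⟨h1.1.1, h2.1⟩,
    fun E hE F hF => ⟨h1.1.2.1 E hE.1 F hF.1, h2.2.1 E hE.2 F hF.2⟩,
    fun E hE F hF => ⟨h1.1.2.2.1 E hE.1 F hF.1, h2.2.2.1 E hE.2 F hF.2⟩,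
    fun E hE F hF => ⟨h1.1.2.2.2 E hE.1 F hF.1, h2.2.2.2 E hE.2 F hF.2⟩⟩,
   fun E hE => h1.2 E hE.1⟩

lemma UC_isFilterIn {x : Set Λ} (hx : x ∈ lamStar C v) :
    IsFilterIn (tailRing C v) (UC C v x) := by
  obtain ⟨⟨a0, ha0⟩, hsub, hdir, hher⟩ := hx
  refine ⟨⟨pTail C a0, pTail_mem_tailRing C v (hsub ha0), a0, ha0, Set.inter_subset_right⟩,
    fun E hE => hE.1, ?_, ?_, ?_⟩
  · rintro E ⟨hE, α, hα, hs⟩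
    exact ⟨α, hs ⟨hα, mem_pTail_self C α⟩⟩
  · rintro E ⟨hE, α, hα, hsE⟩ F ⟨hF, β, hβ, hsF⟩
    obtain ⟨γ, ⟨hγα, hγβ⟩, hγx⟩ := hdir α hα β hβ
    refine ⟨(tailRing_isSetRingOn C v).1.2.2.1 E hE F hF, γ, hγx, fun z hz => ?_⟩
    exact ⟨hsE ⟨hz.1, pTail_subset C hγα hz.2⟩, hsF ⟨hz.1, pTail_subset C hγβ hz.2⟩⟩
  · rintro E ⟨hE, α, hα, hs⟩ F hF hEF
    exact ⟨hF, α, hα, hs.trans hEF⟩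

lemma UC0_isFilterIn {x : Set Λ} (hx : x ∈ lamStar C v) :
    IsFilterIn (tailRing C v) (UC0 C v x) := by
  obtain ⟨⟨a0, ha0⟩, hsub, hdir, hher⟩ := hx
  refine ⟨⟨pTail C a0, pTail_mem_tailRing C v (hsub ha0), a0, ha0, subset_rfl⟩,
    fun E hE => hE.1, ?_, ?_, ?_⟩
  · rintro E ⟨hE, α, hα, hs⟩
    exact ⟨α, hs (mem_pTail_self C α)⟩
  · rintro E ⟨hE, α, hα, hsE⟩ F ⟨hF, β, hβ, hsF⟩
    obtain ⟨γ, ⟨hγα, hγβ⟩, hγx⟩ := hdir α hα β hβ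
    refine ⟨(tailRing_isSetRingOn C v).1.2.2.1 E hE F hF, γ, hγx, fun z hz => ?_⟩
    exact ⟨hsE (pTail_subset C hγα hz), hsF (pTail_subset C hγβ hz)⟩
  · rintro E ⟨hE, α, hα, hs⟩ F hF hEF
    exact ⟨hF, α, hα, hs.trans hEF⟩

lemma isUltrafilterIn_of_dichotomy {γ : Type v} {R U : Set (Set γ)}
    (hU : IsFilterIn R U) (h : ∀ E ∈ R, E ∈ U ∨ ∃ F ∈ U, F ∩ E = ∅) :
    IsUltrafilterIn R U := by
  refine ⟨hU, fun V hV hUV => Set.Subset.antisymm ?_ hUV⟩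
  intro E hE
  rcases h E (hV.2.1 hE) with h1 | ⟨F, hF, hFE⟩
  · exact h1
  · exfalso
    have hmem : F ∩ E ∈ V := hV.2.2.2.1 F (hUV hF) E hE
    exact (hV.2.2.1 _ hmem).ne_empty hFE

lemma UC_dichotomy {x : Set Λ} (hx : x ∈ lamStar C v) :
    ∀ E ∈ tailRing C v, E ∈ UC C v x ∨ ∃ F ∈ UC C v x, F ∩ E = ∅ := by
  obtain ⟨hne, hsub, hdir, hher⟩ := hx
  have hGring : IsSetRing {E : Set Λ | ∃ α ∈ x,
      (x ∩ pTail C α) ⊆ E ∨ ∀ z ∈ x ∩ pTail C α, z ∉ E} := by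
    refine dichotomy_ring x (fun α => x ∩ pTail C α) hne ?_
    intro α hα β hβ
    obtain ⟨γ, ⟨hγα, hγβ⟩, hγx⟩ := hdir α hα β hβ
    exact ⟨γ, hγx, fun z hz => ⟨hz.1, pTail_subset C hγα hz.2⟩,
      fun z hz => ⟨hz.1, pTail_subset C hγβ hz.2⟩⟩
  have hgen : tailRing C v ⊆ tailRing C v ∩ {E : Set Λ | ∃ α ∈ x,
      (x ∩ pTail C α) ⊆ E ∨ ∀ z ∈ x ∩ pTail C α, z ∉ E} := by
    refine setRingGenOn_subset (isSetRingOn_inter (tailRing_isSetRingOn C v) hGring) ?_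
    rintro E ⟨β, hβv, rfl⟩
    refine ⟨pTail_mem_tailRing C v hβv, ?_⟩
    by_cases hβx : β ∈ x
    · exact ⟨β, hβx, Or.inl Set.inter_subset_right⟩
    · obtain ⟨a0, ha0⟩ := hne
      exact ⟨a0, ha0, Or.inr fun z hz hzβ => hβx (hher z hz.1 β hzβ)⟩
  intro E hE
  obtain ⟨α, hα, hcase⟩ := (hgen hE).2
  rcases hcase with hcase | hcase
  · exact Or.inl ⟨hE, α, hα, hcase⟩
  · refine Or.inr ⟨pTail C α \ E, ⟨(tailRing_isSetRingOn C v).1.2.2.2 _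
      (pTail_mem_tailRing C v (hsub hα)) _ hE, α, hα,
      fun z hz => ⟨hz.2, hcase z hz⟩⟩, ?_⟩
    ext z
    simp only [Set.mem_inter_iff, Set.mem_diff, Set.mem_empty_iff_false, iff_false]
    rintro ⟨⟨_, hzE⟩, hzE'⟩
    exact hzE hzE'

lemma UC_isUltrafilterIn {x : Set Λ} (hx : x ∈ lamStar C v) :
    IsUltrafilterIn (tailRing C v) (UC C v x) :=
  isUltrafilterIn_of_dichotomy (UC_isFilterIn C v hx) (UC_dichotomy C v hx)

end Aux2
section Aux3

variable {Λ : Type u} (C : CategoryOfPaths Λ) (v : Λ)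

open Classical in
private noncomputable instance : DecidableEq Λ := Classical.decEq Λ

lemma pigeon {x : Set Λ} (hx : x ∈ lamStar C v) :
    ∀ G : Finset Λ, (∀ ε ∈ G, ∃ α ∈ x, pTail C ε ∩ pTail C α = ∅) →
    ∃ a ∈ x, ∀ ε ∈ G, pTail C ε ∩ pTail C a = ∅ := by
  intro G
  induction G using Finset.induction_on with
  | empty =>
    intro _
    obtain ⟨a0, ha0⟩ := hx.1
    exact ⟨a0, ha0, by simp⟩
  | @insert ε G hεG ih =>
    intro h
    obtain ⟨a, hax, ha⟩ := ih fun ε' hε' => h ε' (Finset.mem_insert_of_mem hε')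
    obtain ⟨α, hαx, hα⟩ := h ε (Finset.mem_insert_self ε G)
    obtain ⟨γ, ⟨hγα, hγa⟩, hγx⟩ := hx.2.2.1 α hαx a hax
    refine ⟨γ, hγx, ?_⟩
    rintro ε' hε'
    rcases Finset.mem_insert.1 hε' with rfl | hε'
    · refine Set.eq_empty_of_subset_empty (hα ▸ ?_)
      exact Set.inter_subset_inter_right _ (pTail_subset C hγα)
    · refine Set.eq_empty_of_subset_empty ((ha ε' hε') ▸ ?_)
      exact Set.inter_subset_inter_right _ (pTail_subset C hγa)

lemma meetsAll_step (hfa : FinitelyAligned C) {x : Set Λ} (hx : x ∈ lamStar C v)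
    {δ θ : Λ} (hδ : ∀ α ∈ x, (pTail C δ ∩ pTail C α).Nonempty) (hθ : θ ∈ x) :
    ∃ ε, ε ∈ pTail C δ ∧ ε ∈ pTail C θ ∧
      ∀ α ∈ x, (pTail C ε ∩ pTail C α).Nonempty := by
  obtain ⟨G, hGfin, hGeq⟩ := hfa δ θ
  by_contra hcon
  push_neg at hcon
  have hG : ∀ ε ∈ hGfin.toFinset, ∃ α ∈ x, pTail C ε ∩ pTail C α = ∅ := by
    intro ε hε
    rw [Set.Finite.mem_toFinset] at hε
    have hεmem : ε ∈ pTail C δ ∩ pTail C θ := by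
      rw [hGeq]
      exact Set.mem_biUnion hε (mem_pTail_self C ε)
    obtain ⟨α, hαx, hα⟩ := hcon ε hεmem.1 hεmem.2
    exact ⟨α, hαx, hα⟩
  obtain ⟨a, hax, ha⟩ := pigeon C v hx hGfin.toFinset hG
  obtain ⟨a', ⟨ha'θ, ha'a⟩, ha'x⟩ := hx.2.2.1 θ hθ a hax
  obtain ⟨η, hηδ, hηa'⟩ := hδ a' ha'x
  have hη2 : η ∈ pTail C δ ∩ pTail C θ := ⟨hηδ, mem_pTail_trans C hηa' ha'θ⟩
  rw [hGeq] at hη2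
  obtain ⟨ε, hεG, hηε⟩ := Set.mem_iUnion₂.1 hη2
  have : η ∈ pTail C ε ∩ pTail C a := ⟨hηε, mem_pTail_trans C hηa' ha'a⟩
  rw [ha ε (Set.Finite.mem_toFinset hGfin |>.2 hεG)] at this
  exact this

/-- The cofinal chain in `x` built from an enumeration `f`. -/
noncomputable def cchain (x : Set Λ) (hdir : pDirected C x)
    (f : ℕ → Λ) (hf : ∀ n, f n ∈ x) : ℕ → {a : Λ // a ∈ x}
  | 0 => ⟨f 0, hf 0⟩
  | n + 1 =>
    let p := cchain x hdir f hf n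
    ⟨(hdir (f (n + 1)) (hf (n + 1)) p.1 p.2).some,
     (hdir (f (n + 1)) (hf (n + 1)) p.1 p.2).some_mem.2⟩

lemma cchain_succ_mem (x : Set Λ) (hdir : pDirected C x) (f : ℕ → Λ)
    (hf : ∀ n, f n ∈ x) (n : ℕ) :
    (cchain C x hdir f hf (n + 1)).1 ∈ pTail C (f (n + 1)) ∧
      (cchain C x hdir f hf (n + 1)).1 ∈ pTail C (cchain C x hdir f hf n).1 := by
  have h := (hdir (f (n + 1)) (hf (n + 1)) (cchain C x hdir f hf n).1
    (cchain C x hdir f hf n).2).some_mem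
  exact ⟨h.1.1, h.1.2⟩

lemma cchain_mem_f (x : Set Λ) (hdir : pDirected C x) (f : ℕ → Λ)
    (hf : ∀ n, f n ∈ x) (n : ℕ) :
    (cchain C x hdir f hf n).1 ∈ pTail C (f n) := by
  cases n with
  | zero => exact mem_pTail_self C (f 0)
  | succ n => exact (cchain_succ_mem C x hdir f hf n).1

/-- The chain of extensions of `β` meeting everything in `x`. -/
noncomputable def dchain (x : Set Λ) (hfa : FinitelyAligned C) (hx : x ∈ lamStar C v)
    (c : ℕ → Λ) (hc : ∀ n, c n ∈ x) (β : Λ)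
    (hβ : ∀ α ∈ x, (pTail C β ∩ pTail C α).Nonempty) :
    ℕ → {a : Λ // ∀ α ∈ x, (pTail C a ∩ pTail C α).Nonempty}
  | 0 => ⟨(meetsAll_step C v hfa hx hβ (hc 0)).choose,
      (meetsAll_step C v hfa hx hβ (hc 0)).choose_spec.2.2⟩
  | n + 1 =>
    let p := dchain x hfa hx c hc β hβ n
    ⟨(meetsAll_step C v hfa hx p.2 (hc (n + 1))).choose,
     (meetsAll_step C v hfa hx p.2 (hc (n + 1))).choose_spec.2.2⟩

lemma dchain_zero_spec (x : Set Λ) (hfa : FinitelyAligned C) (hx : x ∈ lamStar C v)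
    (c : ℕ → Λ) (hc : ∀ n, c n ∈ x) (β : Λ)
    (hβ : ∀ α ∈ x, (pTail C β ∩ pTail C α).Nonempty) :
    (dchain C v x hfa hx c hc β hβ 0).1 ∈ pTail C β ∧
      (dchain C v x hfa hx c hc β hβ 0).1 ∈ pTail C (c 0) := by
  have h := (meetsAll_step C v hfa hx hβ (hc 0)).choose_spec
  exact ⟨h.1, h.2.1⟩

lemma dchain_succ_spec (x : Set Λ) (hfa : FinitelyAligned C) (hx : x ∈ lamStar C v)
    (c : ℕ → Λ) (hc : ∀ n, c n ∈ x) (β : Λ)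
    (hβ : ∀ α ∈ x, (pTail C β ∩ pTail C α).Nonempty) (n : ℕ) :
    (dchain C v x hfa hx c hc β hβ (n + 1)).1 ∈
        pTail C (dchain C v x hfa hx c hc β hβ n).1 ∧
      (dchain C v x hfa hx c hc β hβ (n + 1)).1 ∈ pTail C (c (n + 1)) := by
  have h := (meetsAll_step C v hfa hx (dchain C v x hfa hx c hc β hβ n).2
    (hc (n + 1))).choose_spec
  exact ⟨h.1, h.2.1⟩

lemma mem_of_meetsAll [Countable Λ] (hfa : FinitelyAligned C) {x : Set Λ}
    (hx : x ∈ lamStar C v) (hmax : x ∈ lamStarStar C v) {β : Λ}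
    (hβ : ∀ α ∈ x, (pTail C β ∩ pTail C α).Nonempty) : β ∈ x := by
  obtain ⟨f, hfr⟩ := (Set.to_countable x).exists_eq_range hx.1
  have hf : ∀ n, f n ∈ x := fun n => hfr ▸ Set.mem_range_self n
  set c : ℕ → Λ := fun n => (cchain C x hx.2.2.1 f hf n).1 with hcdef
  have hcx : ∀ n, c n ∈ x := fun n => (cchain C x hx.2.2.1 f hf n).2
  have hcf : ∀ n, c n ∈ pTail C (f n) := fun n => cchain_mem_f C x hx.2.2.1 f hf n
  set d : ℕ → Λ := fun n => (dchain C v x hfa hx c hcx β hβ n).1 with hddef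
  have hd0 : d 0 ∈ pTail C β := (dchain_zero_spec C v x hfa hx c hcx β hβ).1
  have hdc : ∀ n, d n ∈ pTail C (c n) := by
    intro n
    cases n with
    | zero => exact (dchain_zero_spec C v x hfa hx c hcx β hβ).2
    | succ n => exact (dchain_succ_spec C v x hfa hx c hcx β hβ n).2
  have hdd : ∀ n, d (n + 1) ∈ pTail C (d n) :=
    fun n => (dchain_succ_spec C v x hfa hx c hcx β hβ n).1
  have hdmono : ∀ m n, m ≤ n → d n ∈ pTail C (d m) := by
    intro m n hmn
    induction n, hmn using Nat.le_induction with
    | base => exact mem_pTail_self C (d m)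
    | succ n hmn ih => exact mem_pTail_trans C (hdd n) ih
  set D : Set Λ := {a : Λ | ∃ n, d n ∈ pTail C a} with hDdef
  have hDsub : D ⊆ pRng C v := by
    rintro a ⟨n, hn⟩
    have h1 : C.r (d n) = C.r a := rng_eq_of_mem_pTail C hn
    have h2 : C.r (d n) = v := (rng_eq_of_mem_pTail C (hdc n)).trans (hx.2.1 (hcx n))
    exact h1.symm.trans h2
  have hDdir : pDirected C D := by
    rintro a ⟨m, hm⟩ b ⟨n, hn⟩
    refine ⟨d (max m n), ⟨?_, ?_⟩, max m n, mem_pTail_self C _⟩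
    · exact mem_pTail_trans C (hdmono m _ (le_max_left m n)) hm
    · exact mem_pTail_trans C (hdmono n _ (le_max_right m n)) hn
  have hxD : x ⊆ D := by
    intro α hα
    have : α ∈ Set.range f := hfr ▸ hα
    obtain ⟨n, rfl⟩ := this
    exact ⟨n, mem_pTail_trans C (hdc n) (hcf n)⟩
  have hDx : D = x := hmax.2.2 D hDsub hDdir hxD
  exact hDx ▸ ⟨0, hd0⟩

lemma UC0_isUltrafilterIn_of_max [Countable Λ] (hfa : FinitelyAligned C) {x : Set Λ}
    (hx : x ∈ lamStar C v) (hmax : x ∈ lamStarStar C v) :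
    IsUltrafilterIn (tailRing C v) (UC0 C v x) := by
  refine isUltrafilterIn_of_dichotomy (UC0_isFilterIn C v hx) ?_
  have hGring : IsSetRing {E : Set Λ | ∃ α ∈ x,
      pTail C α ⊆ E ∨ ∀ z ∈ pTail C α, z ∉ E} := by
    refine dichotomy_ring x (fun α => pTail C α) hx.1 ?_
    intro α hα β hβ
    obtain ⟨γ, ⟨hγα, hγβ⟩, hγx⟩ := hx.2.2.1 α hα β hβ
    exact ⟨γ, hγx, pTail_subset C hγα, pTail_subset C hγβ⟩
  have hgen : tailRing C v ⊆ tailRing C v ∩ {E : Set Λ | ∃ α ∈ x,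
      pTail C α ⊆ E ∨ ∀ z ∈ pTail C α, z ∉ E} := by
    refine setRingGenOn_subset (isSetRingOn_inter (tailRing_isSetRingOn C v) hGring) ?_
    rintro E ⟨β, hβv, rfl⟩
    refine ⟨pTail_mem_tailRing C v hβv, ?_⟩
    by_cases hmeets : ∀ α ∈ x, (pTail C β ∩ pTail C α).Nonempty
    · have hβx : β ∈ x := mem_of_meetsAll C v hfa hx hmax hmeets
      exact ⟨β, hβx, Or.inl subset_rfl⟩
    · push_neg at hmeets
      obtain ⟨α, hαx, hα⟩ := hmeets
      refine ⟨α, hαx, Or.inr fun z hz hzβ => ?_⟩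
      have : z ∈ pTail C β ∩ pTail C α := ⟨hzβ, hz⟩
      rw [hα] at this
      exact this
  intro E hE
  obtain ⟨α, hα, hcase⟩ := (hgen hE).2
  rcases hcase with hcase | hcase
  · exact Or.inl ⟨hE, α, hα, hcase⟩
  · refine Or.inr ⟨pTail C α, ⟨pTail_mem_tailRing C v (hx.2.1 hα), α, hα, subset_rfl⟩, ?_⟩
    ext z
    simp only [Set.mem_inter_iff, Set.mem_empty_iff_false, iff_false]
    rintro ⟨hzα, hzE⟩
    exact hcase z hzα hzE

lemma max_of_UC0_isUltrafilterIn {x : Set Λ} (hx : x ∈ lamStar C v)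
    (hU : IsUltrafilterIn (tailRing C v) (UC0 C v x)) : x ∈ lamStarStar C v := by
  refine ⟨hx.2.1, hx.2.2.1, ?_⟩
  intro y hysub hydir hxy
  set y' : Set Λ := {a : Λ | ∃ δ ∈ y, δ ∈ pTail C a} with hy'def
  have hyy' : y ⊆ y' := fun δ hδ => ⟨δ, hδ, mem_pTail_self C δ⟩
  have hy'star : y' ∈ lamStar C v := by
    refine ⟨hx.1.mono (hxy.trans hyy'), ?_, ?_, ?_⟩
    · rintro a ⟨δ, hδ, hδa⟩
      exact (rng_eq_of_mem_pTail C hδa).symm.trans (hysub hδ)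
    · rintro a ⟨δ, hδ, hδa⟩ b ⟨ε, hε, hεb⟩
      obtain ⟨γ, ⟨h1, h2⟩, h3⟩ := hydir δ hδ ε hε
      exact ⟨γ, ⟨mem_pTail_trans C h1 hδa, mem_pTail_trans C h2 hεb⟩,
        γ, h3, mem_pTail_self C γ⟩
    · rintro γ ⟨δ, hδ, hδγ⟩ a hγa
      exact ⟨δ, hδ, mem_pTail_trans C hδγ hγa⟩
  have hsub2 : UC0 C v x ⊆ UC C v y' := by
    rintro E ⟨hE, α, hα, hs⟩
    exact ⟨hE, α, hyy' (hxy hα), fun z hz => hs hz.2⟩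
  have hEq : UC C v y' = UC0 C v x := hU.2 _ (UC_isFilterIn C v hy'star) hsub2
  have hy'x : y' ⊆ x := by
    intro δ hδ
    have hδΛ : pTail C δ ∈ UC C v y' :=
      ⟨pTail_mem_tailRing C v (hy'star.2.1 hδ), δ, hδ, fun z hz => hz.2⟩
    rw [hEq] at hδΛ
    obtain ⟨hE, α, hα, hs⟩ := hδΛ
    exact hx.2.2.2 α hα δ (hs (mem_pTail_self C α))
  exact Set.Subset.antisymm (hyy'.trans hy'x) hxy

end Aux3
section Aux4

variable {Λ : Type u} (C : CategoryOfPaths Λ) (v : Λ)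

/-- Union of tails of a list. -/
def UT (C : CategoryOfPaths Λ) (l : List Λ) : Set Λ := {z | ∃ β ∈ l, z ∈ pTail C β}

/-- A basic piece `αΛ \ (β₁Λ ∪ ⋯ ∪ βₙΛ)`. -/
def NFpiece (C : CategoryOfPaths Λ) (p : Λ × List Λ) : Set Λ :=
  pTail C p.1 \ UT C p.2

/-- A finite union of basic pieces. -/
def NFset (C : CategoryOfPaths Λ) (L : List (Λ × List Λ)) : Set Λ :=
  {z | ∃ p ∈ L, z ∈ NFpiece C p}

def goodPair (C : CategoryOfPaths Λ) (v : Λ) (p : Λ × List Λ) : Prop :=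
  C.r p.1 = v ∧ ∀ β ∈ p.2, C.r β = v

/-- The normal-form family. -/
def NFam (C : CategoryOfPaths Λ) (v : Λ) : Set (Set Λ) :=
  {E | ∃ L : List (Λ × List Λ), (∀ p ∈ L, goodPair C v p) ∧ E = NFset C L}

lemma UT_nil : UT C ([] : List Λ) = ∅ := by ext z; simp [UT]

lemma UT_cons (b : Λ) (l : List Λ) : UT C (b :: l) = pTail C b ∪ UT C l := by
  ext z; simp [UT, List.mem_cons, or_and_right, exists_or]

lemma UT_append (l₁ l₂ : List Λ) : UT C (l₁ ++ l₂) = UT C l₁ ∪ UT C l₂ := by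
  ext z; simp [UT, List.mem_append, or_and_right, exists_or]

lemma NFset_nil : NFset C ([] : List (Λ × List Λ)) = ∅ := by ext z; simp [NFset]

lemma NFset_cons (q : Λ × List Λ) (L : List (Λ × List Λ)) :
    NFset C (q :: L) = NFpiece C q ∪ NFset C L := by
  ext z; simp [NFset, List.mem_cons, or_and_right, exists_or]

lemma NFset_append (L₁ L₂ : List (Λ × List Λ)) :
    NFset C (L₁ ++ L₂) = NFset C L₁ ∪ NFset C L₂ := by
  ext z; simp [NFset, List.mem_append, or_and_right, exists_or]

lemma pTail_inter_eq_UT (hfa : FinitelyAligned C) {α : Λ} (β : Λ) (hαv : C.r α = v) :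
    ∃ l : List Λ, (∀ ε ∈ l, C.r ε = v) ∧ pTail C α ∩ pTail C β = UT C l := by
  obtain ⟨G, hGfin, hGeq⟩ := hfa α β
  refine ⟨hGfin.toFinset.toList, ?_, ?_⟩
  · intro ε hε
    rw [Finset.mem_toList, Set.Finite.mem_toFinset] at hε
    have hεmem : ε ∈ pTail C α ∩ pTail C β := by
      rw [hGeq]; exact Set.mem_biUnion hε (mem_pTail_self C ε)
    exact (rng_eq_of_mem_pTail C hεmem.1).trans hαv
  · rw [hGeq]; ext z
    simp [UT, Set.mem_iUnion]

lemma pTail_inter_UT (hfa : FinitelyAligned C) {β : Λ} (hβv : C.r β = v) :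
    ∀ l₂ : List Λ, ∃ l, (∀ ε ∈ l, C.r ε = v) ∧ pTail C β ∩ UT C l₂ = UT C l := by
  intro l₂
  induction l₂ with
  | nil => exact ⟨[], by simp, by simp [UT_nil]⟩
  | cons b t ih =>
    obtain ⟨l1, hl1, heq1⟩ := pTail_inter_eq_UT C v hfa b hβv
    obtain ⟨l2', hl2, heq2⟩ := ih
    refine ⟨l1 ++ l2', ?_, ?_⟩
    · intro ε hε; rcases List.mem_append.1 hε with h | h
      exacts [hl1 ε h, hl2 ε h]
    · rw [UT_cons, Set.inter_union_distrib_left, heq1, heq2, UT_append]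

lemma UT_inter_UT (hfa : FinitelyAligned C) :
    ∀ l₁ : List Λ, (∀ ε ∈ l₁, C.r ε = v) → ∀ l₂ : List Λ,
    ∃ l, (∀ ε ∈ l, C.r ε = v) ∧ UT C l₁ ∩ UT C l₂ = UT C l := by
  intro l₁
  induction l₁ with
  | nil => intro _ l₂; exact ⟨[], by simp, by simp [UT_nil]⟩
  | cons b t ih =>
    intro hl1 l₂
    obtain ⟨la, hla, heqa⟩ := pTail_inter_UT C v hfa (hl1 b (List.mem_cons_self)) l₂
    obtain ⟨lb, hlb, heqb⟩ := ih (fun ε hε => hl1 ε (List.mem_cons_of_mem _ hε)) l₂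
    refine ⟨la ++ lb, ?_, ?_⟩
    · intro ε hε; rcases List.mem_append.1 hε with h | h
      exacts [hla ε h, hlb ε h]
    · rw [UT_cons, Set.union_inter_distrib_right, heqa, heqb, UT_append]

lemma NFam_empty : ∅ ∈ NFam C v := ⟨[], by simp, (NFset_nil C).symm⟩

lemma NFam_union {E F : Set Λ} (hE : E ∈ NFam C v) (hF : F ∈ NFam C v) :
    E ∪ F ∈ NFam C v := by
  obtain ⟨L1, h1, rfl⟩ := hE
  obtain ⟨L2, h2, rfl⟩ := hF
  exact ⟨L1 ++ L2, fun p hp => (List.mem_append.1 hp).elim (h1 p) (h2 p),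
    (NFset_append C L1 L2).symm⟩

lemma NFam_UT {l : List Λ} (hl : ∀ β ∈ l, C.r β = v) : UT C l ∈ NFam C v := by
  refine ⟨l.map (fun β => (β, [])), ?_, ?_⟩
  · intro p hp
    obtain ⟨β, hβ, rfl⟩ := List.mem_map.1 hp
    exact ⟨hl β hβ, by simp⟩
  · ext z
    constructor
    · rintro ⟨β, hβ, hzβ⟩
      exact ⟨(β, []), List.mem_map_of_mem hβ, hzβ, fun h => by simp [UT] at h⟩
    · rintro ⟨p, hp, hz1, _⟩
      obtain ⟨β, hβ, rfl⟩ := List.mem_map.1 hp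
      exact ⟨β, hβ, hz1⟩

lemma NFam_pTail {β : Λ} (hβv : C.r β = v) : pTail C β ∈ NFam C v := by
  have h : pTail C β = UT C [β] := by ext z; simp [UT]
  rw [h]
  exact NFam_UT C v (by simpa using hβv)

lemma NFam_piece_inter_piece (hfa : FinitelyAligned C) {p q : Λ × List Λ}
    (hp : goodPair C v p) (hq : goodPair C v q) :
    NFpiece C p ∩ NFpiece C q ∈ NFam C v := by
  obtain ⟨l, hl, heq⟩ := pTail_inter_eq_UT C v hfa q.1 hp.1
  refine ⟨l.map (fun ε => (ε, p.2 ++ q.2)), ?_, ?_⟩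
  · intro r hr
    obtain ⟨ε, hε, rfl⟩ := List.mem_map.1 hr
    exact ⟨hl ε hε, fun β hβ => (List.mem_append.1 hβ).elim (hp.2 β) (hq.2 β)⟩
  · ext z
    constructor
    · rintro ⟨⟨hz1, hz2⟩, ⟨hz3, hz4⟩⟩
      have hzl : z ∈ UT C l := by rw [← heq]; exact ⟨hz1, hz3⟩
      obtain ⟨ε, hε, hzε⟩ := hzl
      refine ⟨(ε, p.2 ++ q.2), List.mem_map_of_mem hε, hzε, ?_⟩
      rintro ⟨b, hb, hzb⟩
      rcases List.mem_append.1 hb with h | h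
      exacts [hz2 ⟨b, h, hzb⟩, hz4 ⟨b, h, hzb⟩]
    · rintro ⟨r, hr, hz1, hz2⟩
      obtain ⟨ε, hε, rfl⟩ := List.mem_map.1 hr
      have hz3 : z ∈ pTail C p.1 ∩ pTail C q.1 := by
        rw [heq]; exact ⟨ε, hε, hz1⟩
      refine ⟨⟨hz3.1, fun ⟨b, hb, hzb⟩ => hz2 ⟨b, List.mem_append.2 (Or.inl hb), hzb⟩⟩,
        hz3.2, fun ⟨b, hb, hzb⟩ => hz2 ⟨b, List.mem_append.2 (Or.inr hb), hzb⟩⟩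

lemma NFam_piece_inter_NF (hfa : FinitelyAligned C) {p : Λ × List Λ}
    (hp : goodPair C v p) :
    ∀ L : List (Λ × List Λ), (∀ q ∈ L, goodPair C v q) →
      NFpiece C p ∩ NFset C L ∈ NFam C v := by
  intro L
  induction L with
  | nil => intro _; rw [NFset_nil, Set.inter_empty]; exact NFam_empty C v
  | cons q L ih =>
    intro hL
    rw [NFset_cons, Set.inter_union_distrib_left]
    exact NFam_union C v
      (NFam_piece_inter_piece C v hfa hp (hL q (List.mem_cons_self)))
      (ih fun r hr => hL r (List.mem_cons_of_mem _ hr))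

lemma NFam_inter (hfa : FinitelyAligned C) {E F : Set Λ} (hE : E ∈ NFam C v)
    (hF : F ∈ NFam C v) : E ∩ F ∈ NFam C v := by
  obtain ⟨L1, h1, rfl⟩ := hE
  obtain ⟨L2, h2, rfl⟩ := hF
  induction L1 with
  | nil => rw [NFset_nil, Set.empty_inter]; exact NFam_empty C v
  | cons p L ih =>
    rw [NFset_cons, Set.union_inter_distrib_right]
    exact NFam_union C v
      (NFam_piece_inter_NF C v hfa (h1 p (List.mem_cons_self)) L2 h2)
      (ih fun r hr => h1 r (List.mem_cons_of_mem _ hr))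

lemma NFam_diff_pTail {β : Λ} (hβv : C.r β = v) :
    ∀ L : List (Λ × List Λ), (∀ p ∈ L, goodPair C v p) →
      NFset C L \ pTail C β ∈ NFam C v := by
  intro L hL
  refine ⟨L.map (fun p => (p.1, β :: p.2)), ?_, ?_⟩
  · intro q hq
    obtain ⟨p, hp, rfl⟩ := List.mem_map.1 hq
    refine ⟨(hL p hp).1, fun b hb => ?_⟩
    rcases List.mem_cons.1 hb with rfl | hb
    exacts [hβv, (hL p hp).2 b hb]
  · ext z
    constructor
    · rintro ⟨⟨p, hp, hz1, hz2⟩, hz3⟩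
      refine ⟨(p.1, β :: p.2), List.mem_map_of_mem hp, hz1, ?_⟩
      rintro ⟨b, hb, hzb⟩
      rcases List.mem_cons.1 hb with rfl | hb
      exacts [hz3 hzb, hz2 ⟨b, hb, hzb⟩]
    · rintro ⟨q, hq, hz1, hz2⟩
      obtain ⟨p, hp, rfl⟩ := List.mem_map.1 hq
      exact ⟨⟨p, hp, hz1, fun ⟨b, hb, hzb⟩ =>
          hz2 ⟨b, List.mem_cons_of_mem _ hb, hzb⟩⟩,
        fun h => hz2 ⟨β, List.mem_cons_self, h⟩⟩

lemma NFam_diff_UT :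
    ∀ l : List Λ, (∀ β ∈ l, C.r β = v) → ∀ E ∈ NFam C v, E \ UT C l ∈ NFam C v := by
  intro l
  induction l with
  | nil => intro _ E hE; rw [UT_nil, Set.diff_empty]; exact hE
  | cons b t ih =>
    intro hl E hE
    rw [UT_cons, ← Set.diff_diff]
    refine ih (fun β hβ => hl β (List.mem_cons_of_mem _ hβ)) _ ?_
    obtain ⟨L, hL, rfl⟩ := hE
    exact NFam_diff_pTail C v (hl b (List.mem_cons_self)) L hL

lemma NFam_diff_piece (hfa : FinitelyAligned C) {q : Λ × List Λ}
    (hq : goodPair C v q) {E : Set Λ} (hE : E ∈ NFam C v) :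
    E \ NFpiece C q ∈ NFam C v := by
  have heq : E \ NFpiece C q = (E \ pTail C q.1) ∪ (E ∩ UT C q.2) := by
    ext z
    constructor
    · rintro ⟨hzE, hz⟩
      by_cases h1 : z ∈ pTail C q.1
      · exact Or.inr ⟨hzE, by_contra fun h2 => hz ⟨h1, h2⟩⟩
      · exact Or.inl ⟨hzE, h1⟩
    · rintro (⟨hzE, h⟩ | ⟨hzE, h⟩)
      · exact ⟨hzE, fun hp => h hp.1⟩
      · exact ⟨hzE, fun hp => hp.2 h⟩
  rw [heq]
  refine NFam_union C v ?_ (NFam_inter C v hfa hE (NFam_UT C v hq.2))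
  obtain ⟨L, hL, rfl⟩ := hE
  exact NFam_diff_pTail C v hq.1 L hL

lemma NFam_diff (hfa : FinitelyAligned C) {E F : Set Λ} (hE : E ∈ NFam C v)
    (hF : F ∈ NFam C v) : E \ F ∈ NFam C v := by
  obtain ⟨L2, h2, rfl⟩ := hF
  induction L2 generalizing E with
  | nil => rw [NFset_nil, Set.diff_empty]; exact hE
  | cons q L ih =>
    rw [NFset_cons, ← Set.diff_diff]
    exact ih (NFam_diff_piece C v hfa (h2 q (List.mem_cons_self)) hE)
      (fun r hr => h2 r (List.mem_cons_of_mem _ hr))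

lemma NFam_subset_pRng {E : Set Λ} (hE : E ∈ NFam C v) : E ⊆ pRng C v := by
  obtain ⟨L, hL, rfl⟩ := hE
  rintro z ⟨p, hp, hz1, _⟩
  exact (rng_eq_of_mem_pTail C hz1).trans ((hL p hp).1)

lemma NFam_isSetRingOn (hfa : FinitelyAligned C) :
    IsSetRingOn (pRng C v) (NFam C v) :=
  ⟨⟨NFam_empty C v, fun _ hE _ hF => NFam_union C v hE hF,
    fun _ hE _ hF => NFam_inter C v hfa hE hF,
    fun _ hE _ hF => NFam_diff C v hfa hE hF⟩,
   fun _ hE => NFam_subset_pRng C v hE⟩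

lemma tailRing_subset_NFam (hfa : FinitelyAligned C) :
    tailRing C v ⊆ NFam C v := by
  refine setRingGenOn_subset (NFam_isSetRingOn C v hfa) ?_
  rintro E ⟨α, hαv, rfl⟩
  exact NFam_pTail C v hαv

lemma UT_mem_tailRing : ∀ l : List Λ, (∀ β ∈ l, C.r β = v) → UT C l ∈ tailRing C v := by
  intro l
  induction l with
  | nil => intro _; rw [UT_nil]; exact (tailRing_isSetRingOn C v).1.1
  | cons b t ih =>
    intro hl
    rw [UT_cons]
    exact (tailRing_isSetRingOn C v).1.2.1 _
      (pTail_mem_tailRing C v (hl b (List.mem_cons_self)))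
      _ (ih fun β hβ => hl β (List.mem_cons_of_mem _ hβ))

lemma NFpiece_mem_tailRing {p : Λ × List Λ} (hp : goodPair C v p) :
    NFpiece C p ∈ tailRing C v :=
  (tailRing_isSetRingOn C v).1.2.2.2 _ (pTail_mem_tailRing C v hp.1)
    _ (UT_mem_tailRing C v p.2 hp.2)

lemma NFset_mem_tailRing :
    ∀ L : List (Λ × List Λ), (∀ p ∈ L, goodPair C v p) → NFset C L ∈ tailRing C v := by
  intro L
  induction L with
  | nil => intro _; rw [NFset_nil]; exact (tailRing_isSetRingOn C v).1.1
  | cons q L ih =>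
    intro hL
    rw [NFset_cons]
    exact (tailRing_isSetRingOn C v).1.2.1 _
      (NFpiece_mem_tailRing C v (hL q (List.mem_cons_self)))
      _ (ih fun r hr => hL r (List.mem_cons_of_mem _ hr))

end Aux4
section Aux5

variable {Λ : Type u} (C : CategoryOfPaths Λ) (v : Λ)

lemma ultra_dichotomy {γ : Type v} {R U : Set (Set γ)} (hR : IsSetRing R)
    (hU : IsUltrafilterIn R U) : ∀ E ∈ R, E ∈ U ∨ ∃ F ∈ U, F ∩ E = ∅ := by
  intro E hE
  by_cases hEU : E ∈ U
  · exact Or.inl hEU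
  by_cases hmeet : ∀ F ∈ U, (F ∩ E).Nonempty
  · exfalso
    obtain ⟨F0, hF0⟩ := hU.1.1
    have hVfil : IsFilterIn R {B | B ∈ R ∧ ∃ F ∈ U, E ∩ F ⊆ B} := by
      refine ⟨⟨E, hE, F0, hF0, Set.inter_subset_left⟩, fun B hB => hB.1, ?_, ?_, ?_⟩
      · rintro B ⟨hBR, F, hF, hsub⟩
        exact (Set.inter_comm F E ▸ hmeet F hF).mono hsub
      · rintro B1 ⟨h1R, F1, hF1, hs1⟩ B2 ⟨h2R, F2, hF2, hs2⟩
        exact ⟨hR.2.2.1 _ h1R _ h2R, F1 ∩ F2, hU.1.2.2.2.1 F1 hF1 F2 hF2,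
          fun z hz => ⟨hs1 ⟨hz.1, hz.2.1⟩, hs2 ⟨hz.1, hz.2.2⟩⟩⟩
      · rintro B ⟨hBR, F, hF, hs⟩ B' hB' hBB'
        exact ⟨hB', F, hF, hs.trans hBB'⟩
    have hUV : U ⊆ {B | B ∈ R ∧ ∃ F ∈ U, E ∩ F ⊆ B} :=
      fun F hF => ⟨hU.1.2.1 hF, F, hF, Set.inter_subset_right⟩
    have hVU := hU.2 _ hVfil hUV
    exact hEU (hVU ▸ (⟨hE, F0, hF0, Set.inter_subset_left⟩ :
      E ∈ {B | B ∈ R ∧ ∃ F ∈ U, E ∩ F ⊆ B}))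
  · push_neg at hmeet
    obtain ⟨F, hF, hFE⟩ := hmeet
    exact Or.inr ⟨F, hF, hFE⟩

lemma ultra_prime {γ : Type v} {R U : Set (Set γ)} (hR : IsSetRing R)
    (hU : IsUltrafilterIn R U) {E F : Set γ} (hEF : E ∪ F ∈ U) (hE : E ∈ R)
    (hF : F ∈ R) : E ∈ U ∨ F ∈ U := by
  by_contra h
  push_neg at h
  rcases ultra_dichotomy hR hU E hE with h1 | ⟨A, hA, hAE⟩
  · exact h.1 h1
  rcases ultra_dichotomy hR hU F hF with h2 | ⟨B, hB, hBF⟩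
  · exact h.2 h2
  have hmem : A ∩ B ∩ (E ∪ F) ∈ U := hU.1.2.2.2.1 _ (hU.1.2.2.2.1 A hA B hB) _ hEF
  obtain ⟨z, ⟨hzA, hzB⟩, hzEF⟩ := hU.1.2.2.1 _ hmem
  rcases hzEF with hz | hz
  · have : z ∈ A ∩ E := ⟨hzA, hz⟩
    rw [hAE] at this
    exact this
  · have : z ∈ B ∩ F := ⟨hzB, hz⟩
    rw [hBF] at this
    exact this

lemma exists_piece_subset_mem (hfa : FinitelyAligned C) {U : Set (Set Λ)}
    (hU : IsUltrafilterIn (tailRing C v) U) :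
    ∀ L : List (Λ × List Λ), (∀ p ∈ L, goodPair C v p) → NFset C L ∈ U →
    ∃ p, goodPair C v p ∧ NFpiece C p ⊆ NFset C L ∧ NFpiece C p ∈ U := by
  intro L
  induction L with
  | nil =>
    intro _ h
    have hne := hU.1.2.2.1 _ h
    rw [NFset_nil] at hne
    exact absurd hne (by simp)
  | cons q L ih =>
    intro hgood hmem
    rw [NFset_cons] at hmem
    have hq := hgood q (List.mem_cons_self)
    have hLg : ∀ r ∈ L, goodPair C v r := fun r hr => hgood r (List.mem_cons_of_mem _ hr)
    rcases ultra_prime (tailRing_isSetRingOn C v).1 hU hmem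
        (NFpiece_mem_tailRing C v hq) (NFset_mem_tailRing C v L hLg) with h | h
    · exact ⟨q, hq, by rw [NFset_cons]; exact Set.subset_union_left, h⟩
    · obtain ⟨p, hp1, hp2, hp3⟩ := ih hLg h
      exact ⟨p, hp1, by rw [NFset_cons]; exact hp2.trans Set.subset_union_right, hp3⟩

lemma exists_tail_mem_of_UT_mem {U : Set (Set Λ)}
    (hU : IsUltrafilterIn (tailRing C v) U) :
    ∀ l : List Λ, (∀ β ∈ l, C.r β = v) → UT C l ∈ U → ∃ β ∈ l, pTail C β ∈ U := by
  intro l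
  induction l with
  | nil =>
    intro _ h
    have hne := hU.1.2.2.1 _ h
    rw [UT_nil] at hne
    exact absurd hne (by simp)
  | cons b t ih =>
    intro hl hmem
    rw [UT_cons] at hmem
    rcases ultra_prime (tailRing_isSetRingOn C v).1 hU hmem
        (pTail_mem_tailRing C v (hl b (List.mem_cons_self)))
        (UT_mem_tailRing C v t fun β hβ => hl β (List.mem_cons_of_mem _ hβ)) with h | h
    · exact ⟨b, List.mem_cons_self, h⟩
    · obtain ⟨β, h1, h2⟩ := ih (fun β hβ => hl β (List.mem_cons_of_mem _ hβ)) h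
      exact ⟨β, List.mem_cons_of_mem _ h1, h2⟩

lemma UC_inj {y y' : Set Λ} (hy : y ∈ lamStar C v) (hy' : y' ∈ lamStar C v)
    (h : UC C v y = UC C v y') : y = y' := by
  have key : ∀ {a b : Set Λ}, a ∈ lamStar C v → b ∈ lamStar C v →
      UC C v a = UC C v b → a ⊆ b := by
    intro a b ha hb hab δ hδ
    have hδT : pTail C δ ∈ UC C v a :=
      ⟨pTail_mem_tailRing C v (ha.2.1 hδ), δ, hδ, fun z hz => hz.2⟩
    rw [hab] at hδT
    obtain ⟨_, α, hαb, hs⟩ := hδT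
    exact hb.2.2.2 α hαb δ (hs ⟨hαb, mem_pTail_self C α⟩)
  exact Set.Subset.antisymm (key hy hy' h) (key hy' hy h.symm)

end Aux5
/-- Theorem 6.11. For a countable finitely aligned category
of paths: (a) `𝒰_{C,0}` is an ultrafilter iff `C ∈ vΛ**`; (b) `𝒰_C` is an
ultrafilter, fixed iff `C` has a maximal element; (c) every ultrafilter of
`𝒜_v` is `𝒰_C` for a unique `C ∈ vΛ*`. -/
theorem statement12 {Λ : Type u} [Countable Λ] (C : CategoryOfPaths Λ)
    (hfa : FinitelyAligned C) (v : Λ) (hv : C.r v = v)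
    (x : Set Λ) (hx : x ∈ lamStar C v) :
    (IsUltrafilterIn (tailRing C v) (UC0 C v x) ↔ x ∈ lamStarStar C v) ∧
    IsUltrafilterIn (tailRing C v) (UC C v x) ∧
    ((∃ γ, C.r γ = v ∧ UC C v x = {E | E ∈ tailRing C v ∧ γ ∈ E}) ↔
      ∃ m ∈ x, ∀ γ ∈ x, γ ∈ pTail C m → γ = m) ∧
    (∀ U : Set (Set Λ), IsUltrafilterIn (tailRing C v) U →
      ∃! y : Set Λ, y ∈ lamStar C v ∧ U = UC C v y) := by
  refine ⟨⟨fun hU => max_of_UC0_isUltrafilterIn C v hx hU,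
    fun hmax => UC0_isUltrafilterIn_of_max C v hfa hx hmax⟩,
    UC_isUltrafilterIn C v hx, ?_, ?_⟩
  · -- (b) fixed iff maximal element
    constructor
    · rintro ⟨γ, hγv, heq⟩
      have hγTail : pTail C γ ∈ UC C v x := by
        rw [heq]; exact ⟨pTail_mem_tailRing C v hγv, mem_pTail_self C γ⟩
      obtain ⟨_, α, hαx, hs⟩ := hγTail
      have hγx : γ ∈ x := hx.2.2.2 α hαx γ (hs ⟨hαx, mem_pTail_self C α⟩)
      refine ⟨γ, hγx, fun δ hδx hδγ => ?_⟩
      have hδTail : pTail C δ ∈ UC C v x :=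
        ⟨pTail_mem_tailRing C v (hx.2.1 hδx), δ, hδx, fun z hz => hz.2⟩
      rw [heq] at hδTail
      exact pTail_antisymm C hδγ hδTail.2
    · rintro ⟨m, hmx, hmax⟩
      refine ⟨m, hx.2.1 hmx, ?_⟩
      ext E
      constructor
      · rintro ⟨hE, α, hαx, hs⟩
        obtain ⟨γ', ⟨hγα, hγm⟩, hγx⟩ := hx.2.2.1 α hαx m hmx
        have hγ'm : γ' = m := hmax γ' hγx hγm
        have hmmem : m ∈ x ∩ pTail C α := hγ'm ▸ (⟨hγx, hγα⟩ : γ' ∈ x ∩ pTail C α)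
        exact ⟨hE, hs hmmem⟩
      · rintro ⟨hE, hmE⟩
        exact ⟨hE, m, hmx, fun z hz => (hmax z hz.1 hz.2).symm ▸ hmE⟩
  · -- (c) every ultrafilter is UC y for a unique y
    intro U hU
    have hUR : U ⊆ tailRing C v := hU.1.2.1
    set y : Set Λ := {α | C.r α = v ∧ pTail C α ∈ U} with hy
    have hystar : y ∈ lamStar C v := by
      refine ⟨?_, ?_, ?_, ?_⟩
      · obtain ⟨E, hE⟩ := hU.1.1
        obtain ⟨L, hL, hEeq⟩ := tailRing_subset_NFam C v hfa (hUR hE)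
        obtain ⟨p, hp, hpsub, hpU⟩ :=
          exists_piece_subset_mem C v hfa hU L hL (hEeq ▸ hE)
        exact ⟨p.1, hp.1, hU.1.2.2.2.2 _ hpU _ (pTail_mem_tailRing C v hp.1)
          Set.diff_subset⟩
      · exact fun α hα => hα.1
      · intro α hα β hβ
        have hmem : pTail C α ∩ pTail C β ∈ U := hU.1.2.2.2.1 _ hα.2 _ hβ.2
        obtain ⟨l, hl, heq⟩ := pTail_inter_eq_UT C v hfa β hα.1
        rw [heq] at hmem
        obtain ⟨ε, hεl, hεU⟩ := exists_tail_mem_of_UT_mem C v hU l hl hmem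
        have hεmem : ε ∈ pTail C α ∩ pTail C β := by
          rw [heq]; exact ⟨ε, hεl, mem_pTail_self C ε⟩
        exact ⟨ε, ⟨⟨hεmem.1, hεmem.2⟩,
          (rng_eq_of_mem_pTail C hεmem.1).trans hα.1, hεU⟩⟩
      · rintro γ ⟨hγv, hγU⟩ a hγa
        exact ⟨(rng_eq_of_mem_pTail C hγa).symm.trans hγv,
          hU.1.2.2.2.2 _ hγU _ (pTail_mem_tailRing C v
            ((rng_eq_of_mem_pTail C hγa).symm.trans hγv)) (pTail_subset C hγa)⟩
    have hsubU : U ⊆ UC C v y := by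
      intro E hE
      obtain ⟨L, hL, hEeq⟩ := tailRing_subset_NFam C v hfa (hUR hE)
      obtain ⟨p, hp, hpsub, hpU⟩ :=
        exists_piece_subset_mem C v hfa hU L hL (hEeq ▸ hE)
      have hp1U : pTail C p.1 ∈ U :=
        hU.1.2.2.2.2 _ hpU _ (pTail_mem_tailRing C v hp.1) Set.diff_subset
      refine ⟨hUR hE, p.1, ⟨hp.1, hp1U⟩, ?_⟩
      rintro z ⟨⟨hzv, hzU⟩, hzp⟩
      rw [hEeq]
      refine hpsub ⟨hzp, ?_⟩
      rintro ⟨ε, hε, hzε⟩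
      have hεU : pTail C ε ∈ U := hU.1.2.2.2.2 _ hzU _
        (pTail_mem_tailRing C v (hp.2 ε hε)) (pTail_subset C hzε)
      have hmem2 : pTail C ε ∩ NFpiece C p ∈ U := hU.1.2.2.2.1 _ hεU _ hpU
      obtain ⟨w, hw1, hw2, hw3⟩ := hU.1.2.2.1 _ hmem2
      exact hw3 ⟨ε, hε, hw1⟩
    have hEqU : UC C v y = U := hU.2 _ (UC_isFilterIn C v hystar) hsubU
    refine ⟨y, ⟨hystar, hEqU.symm⟩, ?_⟩
    rintro y' ⟨hy'star, hUeq'⟩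
    refine UC_inj C v hy'star hystar ?_
    rw [← hUeq', hEqU]
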